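/- Let q ≥ 3, d ≥ 2 and β ∈ (0,1). Suppose that for all α > 1 and all colours c₁, c₂ ∈ [q] it holds that M_{α,c₁,c₂,β} < α^{1/d}. Then γ(q,β,d,n) → 1 as n → ∞. -/

import Mathlib

open Filter

/-- Weight of a configuration of the `q`-state Potts model with parameter `β`
on the `d`-ary tree of height `n`.  A vertex of the tree is a pair of a depth
`k ≤ n` and a path of length `k`; the parent of a vertex of depth `k+1` is
obtained by dropping the last step of its path.  The weight is
`β ^ (number of monochromatic edges)`. -/
noncomputable def treeWeight (q d n : ℕ) (β : ℝ)
    (σ : (Σ k : Fin (n + 1), (Fin k → Fin d)) → Fin q) : ℝ :=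
  β ^ (Finset.univ.filter (fun p : Σ k : Fin n, (Fin (k + 1) → Fin d) =>
        σ ⟨p.1.succ, p.2⟩ = σ ⟨p.1.castSucc, fun i => p.2 i.castSucc⟩)).card

/-- The conditional probability, under the Gibbs distribution of the `q`-state
Potts model with parameter `β` on the `d`-ary tree `𝕋_{d,n}` of height `n`,
that the root receives colour `c` given that the leaves (the depth-`n`
vertices) are coloured according to `τ`. -/
noncomputable def condRootProb (q d n : ℕ) (β : ℝ)
    (τ : (Fin n → Fin d) → Fin q) (c : Fin q) : ℝ :=
  (∑ σ ∈ Finset.univ.filter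
      (fun σ : (Σ k : Fin (n + 1), (Fin k → Fin d)) → Fin q =>
        σ ⟨⟨0, n.succ_pos⟩, Fin.elim0⟩ = c ∧
          ∀ f : Fin n → Fin d, σ ⟨⟨n, n.lt_succ_self⟩, f⟩ = τ f),
      treeWeight q d n β σ) /
  (∑ σ ∈ Finset.univ.filter
      (fun σ : (Σ k : Fin (n + 1), (Fin k → Fin d)) → Fin q =>
        ∀ f : Fin n → Fin d, σ ⟨⟨n, n.lt_succ_self⟩, f⟩ = τ f),
      treeWeight q d n β σ)

/-- `γ(q,β,d,n)`: the maximum, over boundary configurations `τ` and colours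
`c₁, c₂`, of the ratio of conditional root marginals. -/
noncomputable def pottsGamma (q d : ℕ) (β : ℝ) (n : ℕ) : ℝ :=
  ⨆ τ : (Fin n → Fin d) → Fin q, ⨆ c₁ : Fin q, ⨆ c₂ : Fin q,
    condRootProb q d n β τ c₁ / condRootProb q d n β τ c₂

/-- The function `g_{c₁,c₂,β}` of the two-step recursion. -/
noncomputable def gfun (q d : ℕ) (β : ℝ) (c₁ c₂ : Fin q) (p : Fin d → Fin q → ℝ) : ℝ :=
  ∏ k : Fin d,
    (1 - ((1 - β) * (p k c₁ - p k c₂)) /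
      (β * p k c₂ + ∑ c ∈ Finset.univ.erase c₂, p k c))

/-- The function `h_{c₁,c₂,β}` of the two-step recursion. -/
noncomputable def hfun (q d : ℕ) (β : ℝ) (c₁ c₂ : Fin q) (p : Fin d → Fin q → ℝ) : ℝ :=
  1 + ((1 - β) * (1 - gfun q d β c₁ c₂ p)) /
    (β + ∑ c ∈ Finset.univ.erase c₂, gfun q d β c c₂ p)

/-- `Δ_α`: probability vectors on `q` colours whose entries are within a
factor `α` of each other. -/
def simplexAlpha (q : ℕ) (α : ℝ) : Set (Fin q → ℝ) :=
  {p | (∀ i, 0 ≤ p i) ∧ (∑ i, p i) = 1 ∧ ∀ i j, p i ≤ α * p j}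

/-- `M_{α,c₁,c₂,β}`: the maximum of `h_{c₁,c₂,β}` over `Δ_α^d`. -/
noncomputable def Mval (q d : ℕ) (α β : ℝ) (c₁ c₂ : Fin q) : ℝ :=
  sSup ((hfun q d β c₁ c₂) '' {p | ∀ k, p k ∈ simplexAlpha q α})

/-- `Ex_c(α)`: vectors with entries in `{1, α}`, whose `c`-entry is `1`
and with at least one entry equal to `α`. -/
def exSet (q : ℕ) (c : Fin q) (α : ℝ) : Set (Fin q → ℝ) :=
  {p | (∀ c', p c' = 1 ∨ p c' = α) ∧ p c = 1 ∧ ∃ c', p c' = α}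

/-- The function `f_u(d,β,x,y)` from the one-step analysis. -/
noncomputable def fU (d : ℕ) (β x y : ℝ) : ℝ :=
  (1 - (1 - β) * y) ^ d /
    ((1 - (1 - β) * y) ^ d +
      2 * (1 - (1 - β) * x) ^ ((d : ℝ) / 2) *
        (1 - (1 - β) * (1 - x - y)) ^ ((d : ℝ) / 2))

/-- The function `f_ℓ(d,β,x,y)` from the one-step analysis. -/
noncomputable def fL (d : ℕ) (β x y : ℝ) : ℝ :=
  (1 - (1 - β) * x) ^ d /
    ((1 - (1 - β) * x) ^ d + (1 - (1 - β) * y) ^ d +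
      (1 - (1 - β) * (1 - x - y)) ^ d)

/-- The pair of sequences `(u_n(d,β), ℓ_n(d,β))`, defined by
`u_0 = 1`, `ℓ_0 = 0`, `u_{n+1} = f_u(d,β,u_n,ℓ_n)`, `ℓ_{n+1} = f_ℓ(d,β,u_n,ℓ_n)`. -/
noncomputable def ulSeq (d : ℕ) (β : ℝ) : ℕ → ℝ × ℝ
  | 0 => (1, 0)
  | n + 1 =>
      (fU d β (ulSeq d β n).1 (ulSeq d β n).2,
       fL d β (ulSeq d β n).1 (ulSeq d β n).2)

namespace Potts


abbrev Vtx (d n : ℕ) := Σ k : Fin (n + 1), (Fin k → Fin d)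
abbrev Cfg (q d n : ℕ) := Vtx d n → Fin q
abbrev Edg (d n : ℕ) := Σ k : Fin n, (Fin (k + 1) → Fin d)

def rootV (d n : ℕ) : Vtx d n := ⟨⟨0, n.succ_pos⟩, Fin.elim0⟩

lemma treeWeight_eq_prod (q d n : ℕ) (β : ℝ) (σ : Cfg q d n) :
    treeWeight q d n β σ = ∏ e : Edg d n,
      if σ ⟨e.1.succ, e.2⟩ = σ ⟨e.1.castSucc, fun i => e.2 i.castSucc⟩ then β else 1 := by
  rw [Finset.prod_ite, Finset.prod_const, Finset.prod_const_one, mul_one]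
  rfl

def glue {q d n : ℕ} (c : Fin q) (g : Fin d → Cfg q d n) : Cfg q d (n + 1)
  | ⟨⟨0, _⟩, _⟩ => c
  | ⟨⟨k+1, hk⟩, f⟩ => g (f 0) ⟨⟨k, by omega⟩, fun i => f i.succ⟩

def liftV {d n : ℕ} (k : Fin d) (v : Vtx d n) : Vtx d (n + 1) :=
  ⟨⟨v.1 + 1, by omega⟩, Fin.cons k v.2⟩

def sub {q d n : ℕ} (k : Fin d) (σ : Cfg q d (n + 1)) : Cfg q d n :=
  fun v => σ (liftV k v)

lemma sub_glue {q d n : ℕ} (c : Fin q) (g : Fin d → Cfg q d n) (k : Fin d) :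
    sub k (glue c g) = g k := by
  funext v
  rcases v with ⟨⟨j, hj⟩, f⟩
  simp only [sub, liftV, glue, Fin.cons_zero, Fin.cons_succ]
lemma glue_root {q d n : ℕ} (c : Fin q) (g : Fin d → Cfg q d n) :
    glue c g (rootV d (n+1)) = c := rfl

lemma glue_sub {q d n : ℕ} (σ : Cfg q d (n + 1)) :
    glue (σ (rootV d (n+1))) (fun k => sub k σ) = σ := by
  funext v
  rcases v with ⟨⟨j, hj⟩, f⟩
  cases j with
  | zero =>
    show σ (rootV d (n+1)) = _
    congr 1
    exact Sigma.ext rfl (heq_of_eq (funext fun i => i.elim0))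
  | succ j =>
    simp only [glue, sub, liftV]
    congr 1
    exact Sigma.ext rfl (heq_of_eq (Fin.cons_self_tail f))

def edgeTo {d n : ℕ} : Edg d (n+1) → Fin d ⊕ Fin d × Edg d n
  | ⟨⟨0, _⟩, f⟩ => Sum.inl (f 0)
  | ⟨⟨j+1, hj⟩, f⟩ => Sum.inr (f 0, ⟨⟨j, by omega⟩, fun i => f i.succ⟩)

def edgeFrom {d n : ℕ} : Fin d ⊕ Fin d × Edg d n → Edg d (n+1)
  | Sum.inl a => ⟨⟨0, n.succ_pos⟩, fun _ => a⟩
  | Sum.inr (a, ⟨⟨j, hj⟩, g⟩) => ⟨⟨j+1, by omega⟩, Fin.cons a g⟩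

def edgeEquiv (d n : ℕ) : Edg d (n + 1) ≃ (Fin d ⊕ Fin d × Edg d n) where
  toFun := edgeTo
  invFun := edgeFrom
  left_inv e := by
    rcases e with ⟨⟨j, hj⟩, f⟩
    cases j with
    | zero =>
      simp only [edgeTo, edgeFrom]
      refine Sigma.ext rfl (heq_of_eq (funext fun i => congrArg f (Fin.ext ?_)))
      have h : (i : ℕ) < 1 := i.isLt
      have h0 : (i : ℕ) = 0 := by omega
      exact ((Fin.val_zero _).trans h0.symm)
    | succ j =>
      simp only [edgeTo, edgeFrom]
      exact Sigma.ext rfl (heq_of_eq (Fin.cons_self_tail f))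
  right_inv x := by
    rcases x with a | ⟨a, ⟨⟨j, hj⟩, g⟩⟩
    · rfl
    · simp only [edgeFrom, edgeTo, Fin.cons_zero, Fin.cons_succ]


@[simp] lemma eq_rootV {d n : ℕ} (h : 0 < n + 1)
    (f : Fin ((⟨0, h⟩ : Fin (n+1)) : ℕ) → Fin d) :
    (⟨⟨0, h⟩, f⟩ : Vtx d n) = rootV d n :=
  Sigma.ext rfl (heq_of_eq (funext fun i => i.elim0))

lemma treeWeight_glue (q d n : ℕ) (β : ℝ) (c : Fin q) (g : Fin d → Cfg q d n) :
    treeWeight q d (n+1) β (glue c g) =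
      (∏ k : Fin d, if g k (rootV d n) = c then β else 1) *
        ∏ k : Fin d, treeWeight q d n β (g k) := by
  rw [treeWeight_eq_prod]
  rw [← Equiv.prod_comp (edgeEquiv d n).symm
    (fun e : Edg d (n+1) => if glue c g ⟨e.1.succ, e.2⟩ =
        glue c g ⟨e.1.castSucc, fun i => e.2 i.castSucc⟩ then β else 1)]
  rw [Fintype.prod_sum_type]
  congr 1
  · apply Finset.prod_congr rfl
    intro k _
    have h0 : (edgeEquiv d n).symm (Sum.inl k) = edgeFrom (Sum.inl k) := rfl
    rw [h0]
    have h2 : glue c g ⟨(edgeFrom (Sum.inl k) : Edg d (n+1)).1.succ,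
        (edgeFrom (Sum.inl k) : Edg d (n+1)).2⟩ = g k (rootV d n) :=
      congrArg (g k) (eq_rootV _ _)
    have h1 : glue c g ⟨(edgeFrom (Sum.inl k) : Edg d (n+1)).1.castSucc,
        fun i => (edgeFrom (Sum.inl k) : Edg d (n+1)).2 i.castSucc⟩ = c := rfl
    rw [h2, h1]
  · rw [Fintype.prod_prod_type]
    apply Finset.prod_congr rfl
    intro k _
    rw [treeWeight_eq_prod]
    apply Finset.prod_congr rfl
    intro e _
    have h0 : (edgeEquiv d n).symm (Sum.inr (k, e)) = edgeFrom (Sum.inr (k, e)) := rfl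
    rw [h0]
    rcases e with ⟨⟨j, hj⟩, f⟩
    simp only [edgeFrom, Fin.succ_mk, Fin.castSucc_mk, glue, Fin.cons_zero, Fin.cons_succ,
      Fin.castSucc_zero, ← Fin.succ_castSucc]


noncomputable def Nsum (q d n : ℕ) (β : ℝ) (τ : (Fin n → Fin d) → Fin q) (c : Fin q) : ℝ :=
  ∑ σ ∈ Finset.univ.filter (fun σ : Cfg q d n =>
      σ (rootV d n) = c ∧ ∀ f : Fin n → Fin d, σ ⟨⟨n, n.lt_succ_self⟩, f⟩ = τ f),
    treeWeight q d n β σ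

noncomputable def Dsum (q d n : ℕ) (β : ℝ) (τ : (Fin n → Fin d) → Fin q) : ℝ :=
  ∑ σ ∈ Finset.univ.filter (fun σ : Cfg q d n =>
      ∀ f : Fin n → Fin d, σ ⟨⟨n, n.lt_succ_self⟩, f⟩ = τ f),
    treeWeight q d n β σ

lemma condRootProb_eq (q d n : ℕ) (β : ℝ) (τ : (Fin n → Fin d) → Fin q) (c : Fin q) :
    condRootProb q d n β τ c = Nsum q d n β τ c / Dsum q d n β τ := rfl

lemma treeWeight_pos {q d n : ℕ} {β : ℝ} (hβ : 0 < β) (σ : Cfg q d n) :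
    0 < treeWeight q d n β σ := pow_pos hβ _

lemma Nsum_nonneg {q d n : ℕ} {β : ℝ} (hβ : 0 < β) (τ : (Fin n → Fin d) → Fin q)
    (c : Fin q) : 0 ≤ Nsum q d n β τ c :=
  Finset.sum_nonneg fun σ _ => (treeWeight_pos hβ σ).le

lemma Dsum_pos {q d n : ℕ} {β : ℝ} (hq : 0 < q) (hβ : 0 < β)
    (τ : (Fin n → Fin d) → Fin q) : 0 < Dsum q d n β τ := by
  apply Finset.sum_pos (fun σ _ => treeWeight_pos hβ σ)
  refine ⟨fun v => if h : (v.1 : ℕ) = n then τ (fun i => v.2 ⟨i.1, by rw [h]; exact i.2⟩) else ⟨0, hq⟩, ?_⟩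
  simp only [Finset.mem_filter, Finset.mem_univ, true_and]
  intro f
  exact (dif_pos trivial).trans (congrArg τ (funext fun i => congrArg f (Fin.ext rfl)))

lemma Dsum_eq_sum_Nsum (q d n : ℕ) (β : ℝ) (τ : (Fin n → Fin d) → Fin q) :
    Dsum q d n β τ = ∑ c : Fin q, Nsum q d n β τ c := by
  unfold Dsum Nsum
  rw [← Finset.sum_fiberwise (Finset.univ.filter _) (fun σ => σ (rootV d n))
    (fun σ => treeWeight q d n β σ)]
  apply Finset.sum_congr rfl
  intro c _
  apply Finset.sum_congr _ (fun _ _ => rfl)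
  ext σ
  simp [Finset.mem_filter, and_comm]

lemma sum_condRootProb {q d n : ℕ} {β : ℝ} (hq : 0 < q) (hβ : 0 < β)
    (τ : (Fin n → Fin d) → Fin q) : ∑ c : Fin q, condRootProb q d n β τ c = 1 := by
  simp only [condRootProb_eq, ← Finset.sum_div]
  rw [← Dsum_eq_sum_Nsum, div_self (Dsum_pos hq hβ τ).ne']

lemma condRootProb_nonneg {q d n : ℕ} {β : ℝ} (hq : 0 < q) (hβ : 0 < β)
    (τ : (Fin n → Fin d) → Fin q) (c : Fin q) : 0 ≤ condRootProb q d n β τ c :=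
  div_nonneg (Nsum_nonneg hβ τ c) (Dsum_pos hq hβ τ).le

lemma condRootProb_le_one {q d n : ℕ} {β : ℝ} (hq : 0 < q) (hβ : 0 < β)
    (τ : (Fin n → Fin d) → Fin q) (c : Fin q) : condRootProb q d n β τ c ≤ 1 := by
  have h := sum_condRootProb (q := q) (d := d) (n := n) (β := β) hq hβ τ
  calc condRootProb q d n β τ c
      ≤ ∑ c' : Fin q, condRootProb q d n β τ c' :=
        Finset.single_le_sum (fun c' _ => condRootProb_nonneg hq hβ τ c') (Finset.mem_univ c)
    _ = 1 := h


def leafSet (q d n : ℕ) (τ : (Fin n → Fin d) → Fin q) : Finset (Cfg q d n) :=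
  Finset.univ.filter (fun σ => ∀ f : Fin n → Fin d, σ ⟨⟨n, n.lt_succ_self⟩, f⟩ = τ f)

lemma Nsum_eq_leafSet (q d n : ℕ) (β : ℝ) (τ : (Fin n → Fin d) → Fin q) (c' : Fin q) :
    Nsum q d n β τ c' =
      ∑ σ ∈ (leafSet q d n τ).filter (fun σ => σ (rootV d n) = c'),
        treeWeight q d n β σ := by
  unfold Nsum leafSet
  rw [Finset.filter_filter]
  apply Finset.sum_congr _ (fun _ _ => rfl)
  ext σ
  simp only [Finset.mem_filter, Finset.mem_univ, true_and]
  tauto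

lemma sum_root_ite (q d n : ℕ) (β : ℝ) (τ : (Fin n → Fin d) → Fin q) (c : Fin q) :
    ∑ σ ∈ leafSet q d n τ, (if σ (rootV d n) = c then β else 1) * treeWeight q d n β σ
      = ∑ c' : Fin q, (if c' = c then β else 1) * Nsum q d n β τ c' := by
  rw [← Finset.sum_fiberwise (leafSet q d n τ) (fun σ => σ (rootV d n))
      (fun σ => (if σ (rootV d n) = c then β else 1) * treeWeight q d n β σ)]
  apply Finset.sum_congr rfl
  intro c' _
  rw [Nsum_eq_leafSet, Finset.mul_sum]
  apply Finset.sum_congr rfl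
  intro σ hσ
  rw [(Finset.mem_filter.mp hσ).2]

lemma Nsum_succ (q d n : ℕ) (β : ℝ) (τ : (Fin (n+1) → Fin d) → Fin q) (c : Fin q) :
    Nsum q d (n+1) β τ c =
      ∏ k : Fin d, ∑ c' : Fin q,
        (if c' = c then β else 1) * Nsum q d n β (fun f => τ (Fin.cons k f)) c' := by
  have key : Nsum q d (n+1) β τ c
      = ∑ g ∈ Fintype.piFinset (fun k : Fin d => leafSet q d n (fun f => τ (Fin.cons k f))),
          treeWeight q d (n+1) β (glue c g) := by
    refine Finset.sum_nbij' (i := fun σ => fun k => sub k σ) (j := fun g => glue c g)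
      ?_ ?_ ?_ ?_ ?_
    · intro σ hσ
      simp only [Finset.mem_filter, Finset.mem_univ, true_and] at hσ
      simp only [Fintype.mem_piFinset, leafSet, Finset.mem_filter, Finset.mem_univ, true_and]
      intro k f'
      exact hσ.2 (Fin.cons k f')
    · intro g hg
      simp only [Fintype.mem_piFinset, leafSet, Finset.mem_filter, Finset.mem_univ,
        true_and] at hg
      simp only [Finset.mem_filter, Finset.mem_univ, true_and]
      refine ⟨rfl, fun f => ?_⟩
      exact (hg (f 0) (fun i => f i.succ)).trans (congrArg τ (Fin.cons_self_tail f))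
    · intro σ hσ
      simp only [Finset.mem_filter, Finset.mem_univ, true_and] at hσ
      rw [← hσ.1]
      exact glue_sub σ
    · intro g _
      funext k
      exact sub_glue c g k
    · intro σ hσ
      simp only [Finset.mem_filter, Finset.mem_univ, true_and] at hσ
      congr 1
      rw [← hσ.1]
      exact (glue_sub σ).symm
  rw [key]
  have step2 : ∀ g ∈ Fintype.piFinset
      (fun k : Fin d => leafSet q d n (fun f => τ (Fin.cons k f))),
      treeWeight q d (n+1) β (glue c g)
        = ∏ k : Fin d, ((if g k (rootV d n) = c then β else 1) * treeWeight q d n β (g k)) := by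
    intro g _
    rw [treeWeight_glue, ← Finset.prod_mul_distrib]
  rw [Finset.sum_congr rfl step2]
  have hpu := Finset.prod_univ_sum (fun k : Fin d => leafSet q d n (fun f => τ (Fin.cons k f)))
      (fun k σ' => (if σ' (rootV d n) = c then β else 1) * treeWeight q d n β σ')
  rw [← hpu]
  apply Finset.prod_congr rfl
  intro k _
  exact sum_root_ite q d n β _ c

def τsub {d : ℕ} {n : ℕ} {q : ℕ} (k : Fin d) (τ : (Fin (n+1) → Fin d) → Fin q) :
    (Fin n → Fin d) → Fin q := fun f => τ (Fin.cons k f)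

lemma Nsum_succ' {q d n : ℕ} {β : ℝ} (hq : 0 < q) (hβ : 0 < β)
    (τ : (Fin (n+1) → Fin d) → Fin q) (c : Fin q) :
    Nsum q d (n+1) β τ c = (∏ k : Fin d, Dsum q d n β (τsub k τ)) *
      ∏ k : Fin d, (1 - (1-β) * condRootProb q d n β (τsub k τ) c) := by
  rw [Nsum_succ, ← Finset.prod_mul_distrib]
  apply Finset.prod_congr rfl
  intro k _
  have hD := Dsum_pos (q:=q) (d:=d) (n:=n) (β:=β) hq hβ (τsub k τ)
  have h1 : ∀ c' : Fin q, (if c' = c then β else 1) * Nsum q d n β (τsub k τ) c'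
      = Nsum q d n β (τsub k τ) c'
        + (β - 1) * (if c' = c then Nsum q d n β (τsub k τ) c' else 0) := by
    intro c'; split <;> ring
  show ∑ c' : Fin q, (if c' = c then β else 1) * Nsum q d n β (τsub k τ) c'
      = Dsum q d n β (τsub k τ) * (1 - (1 - β) * condRootProb q d n β (τsub k τ) c)
  rw [Finset.sum_congr rfl (fun c' _ => h1 c'), Finset.sum_add_distrib, ← Finset.mul_sum,
    Finset.sum_ite_eq' Finset.univ c (fun c' => Nsum q d n β (τsub k τ) c'),
    ← Dsum_eq_sum_Nsum]
  simp only [Finset.mem_univ, if_true]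
  rw [condRootProb_eq]
  field_simp
  ring

lemma condRootProb_succ {q d n : ℕ} {β : ℝ} (hq : 0 < q) (hβ : 0 < β)
    (τ : (Fin (n+1) → Fin d) → Fin q) (c : Fin q) :
    condRootProb q d (n+1) β τ c =
      (∏ k : Fin d, (1 - (1-β) * condRootProb q d n β (τsub k τ) c)) /
        (∑ c' : Fin q, ∏ k : Fin d, (1 - (1-β) * condRootProb q d n β (τsub k τ) c')) := by
  have hP : 0 < ∏ k : Fin d, Dsum q d n β (τsub k τ) :=
    Finset.prod_pos fun k _ => Dsum_pos hq hβ _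
  rw [condRootProb_eq, Dsum_eq_sum_Nsum,
    Finset.sum_congr rfl (fun c' _ => Nsum_succ' hq hβ τ c'), Nsum_succ' hq hβ τ c,
    ← Finset.mul_sum, mul_div_mul_left _ _ hP.ne']

lemma wv_pos {q d n : ℕ} {β : ℝ} (hq : 0 < q) (hβ : 0 < β) (hβ1 : β ≤ 1)
    (τ : (Fin n → Fin d) → Fin q) (c : Fin q) :
    0 < 1 - (1-β) * condRootProb q d n β τ c := by
  have h1 := condRootProb_le_one hq hβ τ c
  have h0 := condRootProb_nonneg hq hβ τ c
  nlinarith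

lemma condRootProb_pos {q d n : ℕ} {β : ℝ} (hq : 0 < q) (hβ : 0 < β) (hβ1 : β ≤ 1)
    (τ : (Fin (n+1) → Fin d) → Fin q) (c : Fin q) :
    0 < condRootProb q d (n+1) β τ c := by
  rw [condRootProb_succ hq hβ]
  apply div_pos
  · exact Finset.prod_pos fun k _ => wv_pos hq hβ hβ1 _ c
  · apply Finset.sum_pos (fun c' _ => Finset.prod_pos fun k _ => wv_pos hq hβ hβ1 _ c')
    exact ⟨c, Finset.mem_univ c⟩

/-! ### algebra of g and h -/

def ProbVec {q : ℕ} (p : Fin q → ℝ) : Prop := (∀ i, 0 ≤ p i) ∧ ∑ i, p i = 1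

lemma ProbVec.le_one {q : ℕ} {p : Fin q → ℝ} (hp : ProbVec p) (i : Fin q) : p i ≤ 1 := by
  rw [← hp.2]
  exact Finset.single_le_sum (fun j _ => hp.1 j) (Finset.mem_univ i)

lemma ProbVec.sum_erase {q : ℕ} {p : Fin q → ℝ} (hp : ProbVec p) (c : Fin q) :
    ∑ c' ∈ Finset.univ.erase c, p c' = 1 - p c := by
  rw [Finset.sum_erase_eq_sub (Finset.mem_univ c), hp.2]

lemma wvx_pos {β x : ℝ} (hβ : 0 < β) (hβ1 : β ≤ 1) (hx0 : 0 ≤ x) (hx1 : x ≤ 1) :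
    0 < 1 - (1 - β) * x := by nlinarith

lemma gfun_eq {q d : ℕ} {β : ℝ} (hβ : 0 < β) (hβ1 : β ≤ 1) (c₁ c₂ : Fin q)
    {p : Fin d → Fin q → ℝ} (hp : ∀ k, ProbVec (p k)) :
    gfun q d β c₁ c₂ p =
      ∏ k : Fin d, (1 - (1 - β) * p k c₁) / (1 - (1 - β) * p k c₂) := by
  unfold gfun
  apply Finset.prod_congr rfl
  intro k _
  rw [(hp k).sum_erase c₂]
  have h2 : 0 < 1 - (1 - β) * p k c₂ := wvx_pos hβ hβ1 ((hp k).1 c₂) ((hp k).le_one c₂)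
  have hden : β * p k c₂ + (1 - p k c₂) = 1 - (1 - β) * p k c₂ := by ring
  rw [hden]
  field_simp
  ring

lemma gfun_pos {q d : ℕ} {β : ℝ} (hβ : 0 < β) (hβ1 : β ≤ 1) (c₁ c₂ : Fin q)
    {p : Fin d → Fin q → ℝ} (hp : ∀ k, ProbVec (p k)) :
    0 < gfun q d β c₁ c₂ p := by
  rw [gfun_eq hβ hβ1 c₁ c₂ hp]
  exact Finset.prod_pos fun k _ => div_pos
    (wvx_pos hβ hβ1 ((hp k).1 c₁) ((hp k).le_one c₁))
    (wvx_pos hβ hβ1 ((hp k).1 c₂) ((hp k).le_one c₂))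

lemma gfun_self {q d : ℕ} {β : ℝ} (hβ : 0 < β) (hβ1 : β ≤ 1) (c₂ : Fin q)
    {p : Fin d → Fin q → ℝ} (hp : ∀ k, ProbVec (p k)) :
    gfun q d β c₂ c₂ p = 1 := by
  rw [gfun_eq hβ hβ1 c₂ c₂ hp]
  apply Finset.prod_eq_one
  intro k _
  exact div_self (wvx_pos hβ hβ1 ((hp k).1 c₂) ((hp k).le_one c₂)).ne'

lemma hfun_den_pos {q d : ℕ} {β : ℝ} (hβ : 0 < β) (hβ1 : β ≤ 1) (c₂ : Fin q)
    {p : Fin d → Fin q → ℝ} (hp : ∀ k, ProbVec (p k)) :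
    0 < β + ∑ c ∈ Finset.univ.erase c₂, gfun q d β c c₂ p := by
  have : 0 ≤ ∑ c ∈ Finset.univ.erase c₂, gfun q d β c c₂ p :=
    Finset.sum_nonneg fun c _ => (gfun_pos hβ hβ1 c c₂ hp).le
  linarith

lemma hfun_eq {q d : ℕ} {β : ℝ} (hβ : 0 < β) (hβ1 : β ≤ 1) (c₁ c₂ : Fin q)
    {p : Fin d → Fin q → ℝ} (hp : ∀ k, ProbVec (p k)) :
    hfun q d β c₁ c₂ p =
      (β * gfun q d β c₁ c₂ p + ∑ c ∈ Finset.univ.erase c₁, gfun q d β c c₂ p) /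
        (β * gfun q d β c₂ c₂ p + ∑ c ∈ Finset.univ.erase c₂, gfun q d β c c₂ p) := by
  have hG2 : gfun q d β c₂ c₂ p = 1 := gfun_self hβ hβ1 c₂ hp
  have hden := hfun_den_pos hβ hβ1 c₂ hp
  have hsum1 : ∑ c ∈ Finset.univ.erase c₁, gfun q d β c c₂ p
      = (∑ c : Fin q, gfun q d β c c₂ p) - gfun q d β c₁ c₂ p :=
    (Finset.sum_erase_eq_sub (Finset.mem_univ c₁))
  have hsum2 : ∑ c ∈ Finset.univ.erase c₂, gfun q d β c c₂ p
      = (∑ c : Fin q, gfun q d β c c₂ p) - 1 := by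
    rw [Finset.sum_erase_eq_sub (Finset.mem_univ c₂), hG2]
  unfold hfun
  rw [hG2, hsum1, hsum2]
  rw [hsum2] at hden
  field_simp
  ring

lemma hfun_pos {q d : ℕ} {β : ℝ} (hβ : 0 < β) (hβ1 : β ≤ 1) (c₁ c₂ : Fin q)
    {p : Fin d → Fin q → ℝ} (hp : ∀ k, ProbVec (p k)) :
    0 < hfun q d β c₁ c₂ p := by
  rw [hfun_eq hβ hβ1 c₁ c₂ hp]
  have h1 : 0 ≤ ∑ c ∈ Finset.univ.erase c₁, gfun q d β c c₂ p :=
    Finset.sum_nonneg fun c _ => (gfun_pos hβ hβ1 c c₂ hp).le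
  apply div_pos
  · have := gfun_pos hβ hβ1 c₁ c₂ hp
    nlinarith
  · rw [gfun_self hβ hβ1 c₂ hp, mul_one]
    have := hfun_den_pos hβ hβ1 c₂ hp
    linarith

lemma hfun_le {q d : ℕ} {β : ℝ} (hβ : 0 < β) (hβ1 : β ≤ 1) (c₁ c₂ : Fin q)
    {p : Fin d → Fin q → ℝ} (hp : ∀ k, ProbVec (p k)) :
    hfun q d β c₁ c₂ p ≤ 1 + (1 - β) / β := by
  unfold hfun
  have hden := hfun_den_pos hβ hβ1 c₂ hp
  have hG := gfun_pos hβ hβ1 c₁ c₂ hp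
  have hsum : 0 ≤ ∑ c ∈ Finset.univ.erase c₂, gfun q d β c c₂ p :=
    Finset.sum_nonneg fun c _ => (gfun_pos hβ hβ1 c c₂ hp).le
  have key : ((1 - β) * (1 - gfun q d β c₁ c₂ p)) /
      (β + ∑ c ∈ Finset.univ.erase c₂, gfun q d β c c₂ p) ≤ (1 - β) / β :=
    div_le_div₀ (by linarith) (by nlinarith) hβ (by linarith)
  linarith

lemma ratio_succ {q d n : ℕ} {β : ℝ} (hq : 0 < q) (hβ : 0 < β) (hβ1 : β ≤ 1)
    (τ : (Fin (n+1) → Fin d) → Fin q) (c₁ c₂ : Fin q) :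
    condRootProb q d (n+1) β τ c₁ / condRootProb q d (n+1) β τ c₂ =
      ∏ k : Fin d, ((1 - (1-β) * condRootProb q d n β (τsub k τ) c₁) /
        (1 - (1-β) * condRootProb q d n β (τsub k τ) c₂)) := by
  have hS : 0 < ∑ c' : Fin q, ∏ k : Fin d,
      (1 - (1-β) * condRootProb q d n β (τsub k τ) c') := by
    apply Finset.sum_pos (fun c' _ => Finset.prod_pos fun k _ => wvx_pos hβ hβ1
      (condRootProb_nonneg hq hβ _ c') (condRootProb_le_one hq hβ _ c'))
    exact ⟨c₁, Finset.mem_univ c₁⟩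
  rw [condRootProb_succ hq hβ τ c₁, condRootProb_succ hq hβ τ c₂, div_div_div_comm,
    div_self hS.ne', div_one, Finset.prod_div_distrib]

lemma ratio_two_step {q d n : ℕ} {β : ℝ} (hq : 0 < q) (hβ : 0 < β) (hβ1 : β ≤ 1)
    (τ : (Fin (n+2) → Fin d) → Fin q) (c₁ c₂ : Fin q) :
    condRootProb q d (n+2) β τ c₁ / condRootProb q d (n+2) β τ c₂ =
      ∏ j : Fin d, hfun q d β c₁ c₂
        (fun k c => condRootProb q d n β (τsub k (τsub j τ)) c) := by
  rw [ratio_succ hq hβ hβ1 τ c₁ c₂]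
  apply Finset.prod_congr rfl
  intro j _
  set p : Fin d → Fin q → ℝ := fun k c => condRootProb q d n β (τsub k (τsub j τ)) c
    with hp_def
  have hp : ∀ k, ProbVec (p k) := fun k =>
    ⟨fun c => condRootProb_nonneg hq hβ _ c, sum_condRootProb hq hβ _⟩
  set PP : Fin q → ℝ := fun c => ∏ k : Fin d, (1 - (1-β) * p k c) with hPP
  have hPPpos : ∀ c, 0 < PP c := fun c =>
    Finset.prod_pos fun k _ => wvx_pos hβ hβ1 ((hp k).1 c) ((hp k).le_one c)
  have hS : 0 < ∑ c' : Fin q, PP c' :=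
    Finset.sum_pos (fun c' _ => hPPpos c') ⟨c₁, Finset.mem_univ c₁⟩
  have hwv : ∀ c, condRootProb q d (n+1) β (τsub j τ) c = PP c / (∑ c', PP c') :=
    fun c => condRootProb_succ hq hβ _ c
  have hG : ∀ c, gfun q d β c c₂ p = PP c / PP c₂ := by
    intro c
    rw [gfun_eq hβ hβ1 c c₂ hp, Finset.prod_div_distrib]
  have hsum : ∀ c0 : Fin q, ∑ c ∈ Finset.univ.erase c0, gfun q d β c c₂ p
      = ((∑ c', PP c') - PP c0) / PP c₂ := by
    intro c0
    rw [Finset.sum_congr rfl (fun c _ => hG c), ← Finset.sum_div,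
      Finset.sum_erase_eq_sub (Finset.mem_univ c0)]
  rw [hfun_eq hβ hβ1 c₁ c₂ hp, hG c₁, hG c₂, hsum c₁, hsum c₂, hwv c₁, hwv c₂]
  have h2 : (0:ℝ) < PP c₂ := hPPpos c₂
  have h1 : (0:ℝ) < PP c₁ := hPPpos c₁
  have hle : PP c₂ ≤ ∑ c', PP c' :=
    Finset.single_le_sum (fun c _ => (hPPpos c).le) (Finset.mem_univ c₂)
  have hd2 : 0 < β * PP c₂ + ((∑ c', PP c') - PP c₂) := by nlinarith
  have eL1 : (1 - (1-β) * (PP c₁ / (∑ c', PP c')))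
      = (β * PP c₁ + ((∑ c', PP c') - PP c₁)) / (∑ c', PP c') := by
    field_simp
    ring
  have eL2 : (1 - (1-β) * (PP c₂ / (∑ c', PP c')))
      = (β * PP c₂ + ((∑ c', PP c') - PP c₂)) / (∑ c', PP c') := by
    field_simp
    ring
  have eR1 : β * (PP c₁ / PP c₂) + ((∑ c', PP c') - PP c₁) / PP c₂
      = (β * PP c₁ + ((∑ c', PP c') - PP c₁)) / PP c₂ := by
    rw [mul_div_assoc', ← add_div]
  have eR2 : β * (PP c₂ / PP c₂) + ((∑ c', PP c') - PP c₂) / PP c₂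
      = (β * PP c₂ + ((∑ c', PP c') - PP c₂)) / PP c₂ := by
    rw [mul_div_assoc', ← add_div]
  rw [eL1, eL2, eR1, eR2, div_div_div_comm, div_self hS.ne', div_one,
    div_div_div_comm, div_self h2.ne', div_one]

/-! ### pottsGamma and Mval API -/

lemma le_pottsGamma {q d n : ℕ} {β : ℝ} (hq : 0 < q)
    (τ : (Fin n → Fin d) → Fin q) (c₁ c₂ : Fin q) :
    condRootProb q d n β τ c₁ / condRootProb q d n β τ c₂ ≤ pottsGamma q d β n := by
  haveI : Nonempty (Fin q) := ⟨⟨0, hq⟩⟩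
  calc condRootProb q d n β τ c₁ / condRootProb q d n β τ c₂
      ≤ ⨆ c₂' : Fin q, condRootProb q d n β τ c₁ / condRootProb q d n β τ c₂' :=
        le_ciSup (f := fun c₂' : Fin q =>
          condRootProb q d n β τ c₁ / condRootProb q d n β τ c₂')
          (Set.finite_range _).bddAbove c₂
    _ ≤ ⨆ c₁' : Fin q, ⨆ c₂' : Fin q,
          condRootProb q d n β τ c₁' / condRootProb q d n β τ c₂' :=
        le_ciSup (f := fun c₁' : Fin q => ⨆ c₂' : Fin q,
          condRootProb q d n β τ c₁' / condRootProb q d n β τ c₂')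
          (Set.finite_range _).bddAbove c₁
    _ ≤ pottsGamma q d β n := by
        unfold pottsGamma
        exact le_ciSup (f := fun τ' : (Fin n → Fin d) → Fin q => ⨆ c₁' : Fin q,
          ⨆ c₂' : Fin q, condRootProb q d n β τ' c₁' / condRootProb q d n β τ' c₂')
          (Set.finite_range _).bddAbove τ

lemma pottsGamma_le {q d n : ℕ} {β x : ℝ} (hq : 0 < q)
    (h : ∀ (τ : (Fin n → Fin d) → Fin q) (c₁ c₂ : Fin q),
      condRootProb q d n β τ c₁ / condRootProb q d n β τ c₂ ≤ x) :
    pottsGamma q d β n ≤ x := by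
  haveI : Nonempty (Fin q) := ⟨⟨0, hq⟩⟩
  exact ciSup_le fun τ => ciSup_le fun c₁ => ciSup_le fun c₂ => h τ c₁ c₂

lemma one_le_pottsGamma {q d n : ℕ} {β : ℝ} (hq : 0 < q) (hβ : 0 < β) (hβ1 : β ≤ 1) :
    1 ≤ pottsGamma q d β (n+1) := by
  have h := le_pottsGamma (q := q) (d := d) (n := n+1) (β := β) hq
    (fun _ => (⟨0, hq⟩ : Fin q)) ⟨0, hq⟩ ⟨0, hq⟩
  rwa [div_self (condRootProb_pos hq hβ hβ1 _ _).ne'] at h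

lemma marg_mem {q d n : ℕ} {β α : ℝ} (hq : 0 < q) (hβ : 0 < β) (hβ1 : β ≤ 1)
    (hα : pottsGamma q d β (n+1) ≤ α) (τ : (Fin (n+1) → Fin d) → Fin q) :
    (fun c => condRootProb q d (n+1) β τ c) ∈ simplexAlpha q α := by
  refine ⟨fun c => condRootProb_nonneg hq hβ τ c, sum_condRootProb hq hβ τ, fun i j => ?_⟩
  have hj := condRootProb_pos hq hβ hβ1 τ j
  have h := le_trans (le_pottsGamma hq τ i j) hα
  rw [div_le_iff₀ hj] at h
  linarith [h]

lemma simplex_probVec {q : ℕ} {α : ℝ} {p : Fin q → ℝ} (hp : p ∈ simplexAlpha q α) :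
    ProbVec p := ⟨hp.1, hp.2.1⟩

lemma mem_domain_uniform {q d : ℕ} {α : ℝ} (hq : 0 < q) (hα : 1 ≤ α) :
    (fun _ _ => (q:ℝ)⁻¹ : Fin d → Fin q → ℝ) ∈
      {p : Fin d → Fin q → ℝ | ∀ k, p k ∈ simplexAlpha q α} := by
  have hq' : (0:ℝ) < q := by exact_mod_cast hq
  intro k
  refine ⟨fun i => by positivity, ?_, fun i j => ?_⟩
  · rw [Finset.sum_const, Finset.card_univ, Fintype.card_fin, nsmul_eq_mul,
      mul_inv_cancel₀ hq'.ne']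
  · nlinarith [inv_pos.mpr hq']

lemma hfun_uniform (q d : ℕ) (β : ℝ) (c₁ c₂ : Fin q) :
    hfun q d β c₁ c₂ (fun _ _ => (q:ℝ)⁻¹) = 1 := by
  simp [hfun, gfun]

lemma bddAbove_hfun_image {q d : ℕ} {β : ℝ} (hβ : 0 < β) (hβ1 : β ≤ 1) (α : ℝ)
    (c₁ c₂ : Fin q) :
    BddAbove (hfun q d β c₁ c₂ '' {p : Fin d → Fin q → ℝ | ∀ k, p k ∈ simplexAlpha q α}) := by
  refine ⟨1 + (1-β)/β, fun x hx => ?_⟩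
  obtain ⟨p, hp, rfl⟩ := hx
  exact hfun_le hβ hβ1 c₁ c₂ (fun k => simplex_probVec (hp k))

lemma hfun_le_Mval {q d : ℕ} {β α : ℝ} (hβ : 0 < β) (hβ1 : β ≤ 1) (c₁ c₂ : Fin q)
    {p : Fin d → Fin q → ℝ} (hp : ∀ k, p k ∈ simplexAlpha q α) :
    hfun q d β c₁ c₂ p ≤ Mval q d α β c₁ c₂ :=
  le_csSup (bddAbove_hfun_image hβ hβ1 α c₁ c₂) (Set.mem_image_of_mem _ hp)

lemma one_le_Mval {q d : ℕ} {β α : ℝ} (hq : 0 < q) (hβ : 0 < β) (hβ1 : β ≤ 1)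
    (hα : 1 ≤ α) (c₁ c₂ : Fin q) : 1 ≤ Mval q d α β c₁ c₂ := by
  have := hfun_le_Mval (q := q) (d := d) hβ hβ1 c₁ c₂ (mem_domain_uniform hq hα)
  rwa [hfun_uniform] at this

lemma pottsGamma_step {q d n : ℕ} {β α x : ℝ} (hq : 0 < q) (hβ : 0 < β) (hβ1 : β ≤ 1)
    (hγ : pottsGamma q d β (n+1) ≤ α)
    (hx : ∀ c₁ c₂ : Fin q, Mval q d α β c₁ c₂ ≤ x) :
    pottsGamma q d β (n+3) ≤ x ^ d := by
  apply pottsGamma_le hq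
  intro τ c₁ c₂
  have h2 := ratio_two_step (n := n+1) hq hβ hβ1 τ c₁ c₂
  rw [h2]
  have hmem : ∀ j : Fin d, ∀ k : Fin d,
      (fun c => condRootProb q d (n+1) β (τsub k (τsub j τ)) c) ∈ simplexAlpha q α :=
    fun j k => marg_mem hq hβ hβ1 hγ _
  calc ∏ j : Fin d, hfun q d β c₁ c₂
        (fun k c => condRootProb q d (n+1) β (τsub k (τsub j τ)) c)
      ≤ ∏ _j : Fin d, x := by
        apply Finset.prod_le_prod
        · intro j _
          exact (hfun_pos hβ hβ1 c₁ c₂ (fun k => simplex_probVec (hmem j k))).le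
        · intro j _
          exact le_trans (hfun_le_Mval hβ hβ1 c₁ c₂ (hmem j)) (hx c₁ c₂)
    _ = x ^ d := by rw [Finset.prod_const, Finset.card_univ, Fintype.card_fin]

/-! ### compactness: uniform contraction -/

def Kset (q d : ℕ) (ε B : ℝ) : Set (ℝ × (Fin d → Fin q → ℝ)) :=
  {x | x.1 ∈ Set.Icc (1+ε) B ∧ ∀ k, x.2 k ∈ simplexAlpha q x.1}

lemma cont_coord {q d : ℕ} (k : Fin d) (i : Fin q) :
    Continuous fun x : ℝ × (Fin d → Fin q → ℝ) => x.2 k i :=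
  (continuous_apply i).comp ((continuous_apply k).comp continuous_snd)

lemma Kset_closed (q d : ℕ) (ε B : ℝ) : IsClosed (Kset q d ε B) := by
  have h1 : IsClosed {x : ℝ × (Fin d → Fin q → ℝ) | x.1 ∈ Set.Icc (1+ε) B} :=
    isClosed_Icc.preimage continuous_fst
  have h2 : IsClosed {x : ℝ × (Fin d → Fin q → ℝ) | ∀ k, x.2 k ∈ simplexAlpha q x.1} := by
    rw [Set.setOf_forall]
    refine isClosed_iInter fun k => ?_
    have he : {x : ℝ × (Fin d → Fin q → ℝ) | x.2 k ∈ simplexAlpha q x.1}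
        = {x | ∀ i, 0 ≤ x.2 k i} ∩ ({x | (∑ i, x.2 k i) = 1}
            ∩ {x | ∀ i j, x.2 k i ≤ x.1 * x.2 k j}) := rfl
    rw [he]
    refine IsClosed.inter ?_ (IsClosed.inter ?_ ?_)
    · rw [Set.setOf_forall]
      exact isClosed_iInter fun i => isClosed_le continuous_const (cont_coord k i)
    · exact isClosed_eq (continuous_finset_sum _ fun i _ => cont_coord k i) continuous_const
    · rw [Set.setOf_forall]
      refine isClosed_iInter fun i => ?_
      rw [Set.setOf_forall]
      exact isClosed_iInter fun j =>
        isClosed_le (cont_coord k i) (continuous_fst.mul (cont_coord k j))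
  exact h1.inter h2

lemma Kset_compact (q d : ℕ) (ε B : ℝ) : IsCompact (Kset q d ε B) := by
  apply IsCompact.of_isClosed_subset
    (isCompact_Icc (a := ((1+ε, fun _ _ => 0) : ℝ × (Fin d → Fin q → ℝ)))
      (b := (B, fun _ _ => 1)))
    (Kset_closed q d ε B)
  rintro x ⟨hx1, hx2⟩
  rw [Set.mem_Icc]
  exact ⟨⟨hx1.1, fun k i => (hx2 k).1 i⟩,
    ⟨hx1.2, fun k i => (simplex_probVec (hx2 k)).le_one i⟩⟩

lemma F_contOn {q d : ℕ} {β : ℝ} (hβ0 : 0 < β) (hβ1 : β < 1) (ε B : ℝ) (c₁ c₂ : Fin q) :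
    ContinuousOn (fun x : ℝ × (Fin d → Fin q → ℝ) =>
      x.1 ^ (1/(d:ℝ)) - hfun q d β c₁ c₂ x.2) (Kset q d ε B) := by
  apply ContinuousOn.sub
  · exact ((Real.continuous_rpow_const (by positivity)).comp continuous_fst).continuousOn
  · have hgcont : ∀ c c' : Fin q,
        ContinuousOn (fun x : ℝ × (Fin d → Fin q → ℝ) => gfun q d β c c' x.2)
          (Kset q d ε B) := by
      intro c c'
      show ContinuousOn (fun x : ℝ × (Fin d → Fin q → ℝ) => ∏ k : Fin d,
        (1 - ((1 - β) * (x.2 k c - x.2 k c')) /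
          (β * x.2 k c' + ∑ i ∈ Finset.univ.erase c', x.2 k i))) (Kset q d ε B)
      apply continuousOn_finset_prod
      intro k _
      apply ContinuousOn.sub continuousOn_const
      apply ContinuousOn.div
      · exact (continuous_const.mul ((cont_coord k c).sub (cont_coord k c'))).continuousOn
      · exact ((continuous_const.mul (cont_coord k c')).add
          (continuous_finset_sum _ fun i _ => cont_coord k i)).continuousOn
      · intro x hx
        have hpv : ProbVec (x.2 k) := simplex_probVec (hx.2 k)
        have he : β * x.2 k c' + ∑ i ∈ Finset.univ.erase c', x.2 k i
            = 1 - (1-β) * x.2 k c' := by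
          rw [hpv.sum_erase c']; ring
        rw [he]
        exact (wvx_pos hβ0 hβ1.le (hpv.1 c') (hpv.le_one c')).ne'
    show ContinuousOn (fun x : ℝ × (Fin d → Fin q → ℝ) =>
      1 + ((1-β) * (1 - gfun q d β c₁ c₂ x.2)) /
        (β + ∑ c ∈ Finset.univ.erase c₂, gfun q d β c c₂ x.2)) (Kset q d ε B)
    apply ContinuousOn.add continuousOn_const
    apply ContinuousOn.div
    · exact ContinuousOn.mul continuousOn_const
        (ContinuousOn.sub continuousOn_const (hgcont c₁ c₂))
    · exact ContinuousOn.add continuousOn_const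
        (continuousOn_finset_sum _ fun c _ => hgcont c c₂)
    · intro x hx
      exact (hfun_den_pos hβ0 hβ1.le c₂ (fun k => simplex_probVec (hx.2 k))).ne'

lemma Mval_contract {q d : ℕ} {β : ℝ} (hq : 0 < q) (hβ0 : 0 < β) (hβ1 : β < 1)
    (hM : ∀ α : ℝ, 1 < α → ∀ c₁ c₂ : Fin q, Mval q d α β c₁ c₂ < α ^ (1/(d:ℝ)))
    {ε B : ℝ} (hε : 0 < ε) (hB : 1 + ε ≤ B) :
    ∃ δ, 0 < δ ∧ ∀ α ∈ Set.Icc (1+ε) B, ∀ c₁ c₂ : Fin q,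
      Mval q d α β c₁ c₂ ≤ α ^ (1/(d:ℝ)) - δ := by
  have per : ∀ cc : Fin q × Fin q, ∃ δ, 0 < δ ∧ ∀ α ∈ Set.Icc (1+ε) B,
      Mval q d α β cc.1 cc.2 ≤ α ^ (1/(d:ℝ)) - δ := by
    rintro ⟨c₁, c₂⟩
    have hKne : (Kset q d ε B).Nonempty :=
      ⟨(1+ε, fun _ _ => (q:ℝ)⁻¹),
        ⟨⟨le_refl _, hB⟩, mem_domain_uniform hq (by linarith)⟩⟩
    obtain ⟨x₀, hx₀K, hmin⟩ := (Kset_compact q d ε B).exists_isMinOn hKne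
      (F_contOn hβ0 hβ1 ε B c₁ c₂)
    refine ⟨x₀.1 ^ (1/(d:ℝ)) - hfun q d β c₁ c₂ x₀.2, ?_, ?_⟩
    · have h1 : 1 + ε ≤ x₀.1 := hx₀K.1.1
      have h3 := hM x₀.1 (by linarith) c₁ c₂
      have h2 : hfun q d β c₁ c₂ x₀.2 ≤ Mval q d x₀.1 β c₁ c₂ :=
        hfun_le_Mval hβ0 hβ1.le c₁ c₂ hx₀K.2
      linarith
    · intro α hα
      apply csSup_le
      · exact ⟨_, Set.mem_image_of_mem _
          (mem_domain_uniform (d := d) hq (by linarith [hα.1]))⟩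
      · rintro y ⟨p, hp, rfl⟩
        have hxK : (α, p) ∈ Kset q d ε B := ⟨hα, hp⟩
        have hm := isMinOn_iff.mp hmin (α, p) hxK
        simp only at hm
        linarith
  choose δf hδf using per
  have hne : (Finset.univ : Finset (Fin q × Fin q)).Nonempty :=
    ⟨(⟨0, hq⟩, ⟨0, hq⟩), Finset.mem_univ _⟩
  refine ⟨Finset.univ.inf' hne δf, ?_, ?_⟩
  · rw [Finset.lt_inf'_iff]
    exact fun cc _ => (hδf cc).1
  · intro α hα c₁ c₂
    have h := (hδf (c₁, c₂)).2 α hα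
    have h2 : Finset.univ.inf' hne δf ≤ δf (c₁, c₂) := Finset.inf'_le _ (Finset.mem_univ _)
    linarith

/-! ### final limit argument -/

lemma sub_le_pow_sub {a b : ℝ} (hb : 1 ≤ b) (hab : b ≤ a) {d : ℕ} (hd : 0 < d) :
    a - b ≤ a ^ d - b ^ d := by
  obtain ⟨m, rfl⟩ := Nat.exists_eq_succ_of_ne_zero hd.ne'
  have h0b : (0:ℝ) ≤ b := by linarith
  have h1 : b ^ m ≤ a ^ m := pow_le_pow_left₀ h0b hab m
  have h2 : (1:ℝ) ≤ b ^ m := by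
    have := pow_le_pow_left₀ (by norm_num : (0:ℝ) ≤ 1) hb m
    simpa using this
  have h3 : (a - b) * b ^ m ≤ a ^ (m+1) - b ^ (m+1) := by
    have h4 : a * b ^ m ≤ a * a ^ m := mul_le_mul_of_nonneg_left h1 (by linarith)
    calc (a - b) * b ^ m = a * b ^ m - b * b ^ m := by ring
      _ ≤ a * a ^ m - b * b ^ m := by linarith
      _ = a ^ (m+1) - b ^ (m+1) := by ring
  have h5 : (a - b) * 1 ≤ (a - b) * b ^ m := mul_le_mul_of_nonneg_left h2 (by linarith)
  calc a - b = (a - b) * 1 := by ring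
    _ ≤ (a - b) * b ^ m := h5
    _ ≤ a ^ (m+1) - b ^ (m+1) := h3

lemma rpow_pow_of_nonneg {α : ℝ} (hα : 0 ≤ α) {d : ℕ} (hd : 0 < d) :
    (α ^ (1/(d:ℝ))) ^ d = α := by
  rw [← Real.rpow_natCast (α ^ (1/(d:ℝ))) d, ← Real.rpow_mul hα, one_div,
    inv_mul_cancel₀ (by exact_mod_cast hd.ne' : (d:ℝ) ≠ 0), Real.rpow_one]

theorem main_bound {q d : ℕ} {β : ℝ} (hq : 0 < q) (hd : 0 < d)
    (hβ0 : 0 < β) (hβ1 : β < 1)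
    (hM : ∀ α : ℝ, 1 < α → ∀ c₁ c₂ : Fin q, Mval q d α β c₁ c₂ < α ^ (1/(d:ℝ)))
    {ε : ℝ} (hε : 0 < ε) :
    ∃ N, ∀ n, N ≤ n → pottsGamma q d β n ≤ 1 + ε := by
  set B := max (max (pottsGamma q d β 1) (pottsGamma q d β 2)) (1+ε) with hBdef
  have hB : 1 + ε ≤ B := le_max_right _ _
  obtain ⟨δ, hδ, hcontr⟩ := Mval_contract hq hβ0 hβ1 hM hε hB
  have step' : ∀ m : ℕ, 1 ≤ m → ∀ α, 1+ε ≤ α → α ≤ B → pottsGamma q d β m ≤ α →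
      pottsGamma q d β (m+2) ≤ α - δ := by
    intro m hm
    cases m with
    | zero => omega
    | succ n =>
      intro α hα1 hαB hγ
      have hMle : ∀ c₁ c₂ : Fin q, Mval q d α β c₁ c₂ ≤ α ^ (1/(d:ℝ)) - δ :=
        hcontr α ⟨hα1, hαB⟩
      have h1le : (1:ℝ) ≤ α ^ (1/(d:ℝ)) - δ :=
        le_trans (one_le_Mval hq hβ0 hβ1.le (by linarith) ⟨0, hq⟩ ⟨0, hq⟩) (hMle _ _)
      have hstep := pottsGamma_step hq hβ0 hβ1.le hγ hMle
      have hαd : (α ^ (1/(d:ℝ))) ^ d = α := rpow_pow_of_nonneg (by linarith) hd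
      have hsub := sub_le_pow_sub h1le (by linarith : α ^ (1/(d:ℝ)) - δ ≤ α ^ (1/(d:ℝ))) hd
      rw [hαd] at hsub
      have : α ^ (1/(d:ℝ)) - (α ^ (1/(d:ℝ)) - δ) = δ := by ring
      rw [this] at hsub
      calc pottsGamma q d β (n+1+2) ≤ (α ^ (1/(d:ℝ)) - δ) ^ d := hstep
        _ ≤ α - δ := by linarith
  have bounded : ∀ j : ℕ, ∀ n : ℕ, (n = 1 ∨ n = 2) →
      pottsGamma q d β (n + 2*j) ≤ max (B - j*δ) (1+ε) := by
    intro j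
    induction j with
    | zero =>
      intro n hn
      have hB' : pottsGamma q d β n ≤ B := by
        rcases hn with rfl | rfl
        · exact le_trans (le_max_left _ _) (le_max_left _ _)
        · exact le_trans (le_max_right _ _) (le_max_left _ _)
      simpa using le_trans hB' (le_max_left _ _)
    | succ j ih =>
      intro n hn
      have ihn := ih n hn
      have hidx : n + 2*(j+1) = (n + 2*j) + 2 := by ring
      rw [hidx]
      have hm1 : 1 ≤ n + 2*j := by omega
      rcases le_or_gt (pottsGamma q d β (n + 2*j)) (1+ε) with hsm | hbg
      · have := step' (n + 2*j) hm1 (1+ε) le_rfl hB hsm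
        refine le_trans this (le_trans ?_ (le_max_right _ _))
        linarith
      · have hle : pottsGamma q d β (n + 2*j) ≤ B - j*δ := by
          rcases le_max_iff.mp ihn with h | h
          · exact h
          · linarith
        have hα1 : 1 + ε ≤ B - j*δ := by linarith
        have hαB : B - j*δ ≤ B := by
          have : (0:ℝ) ≤ (j:ℕ) * δ := by positivity
          linarith
        have := step' (n + 2*j) hm1 (B - j*δ) hα1 hαB hle
        refine le_trans this (le_trans ?_ (le_max_left _ _))
        have : ((j+1 : ℕ):ℝ) = (j:ℝ) + 1 := by push_cast; ring
        rw [this]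
        ring_nf
        linarith [le_refl (B - ((j:ℝ)+1)*δ)]
  obtain ⟨j₀, hj₀⟩ := exists_nat_gt ((B - (1+ε))/δ)
  have hj₀' : B - (j₀:ℝ)*δ ≤ 1 + ε := by
    rw [div_lt_iff₀ hδ] at hj₀
    linarith
  refine ⟨3 + 2*j₀, fun n hn => ?_⟩
  have key : ∀ j : ℕ, j₀ ≤ j → ∀ n₀ : ℕ, (n₀ = 1 ∨ n₀ = 2) →
      pottsGamma q d β (n₀ + 2*j) ≤ 1 + ε := by
    intro j hj n₀ hn₀
    refine le_trans (bounded j n₀ hn₀) (max_le ?_ le_rfl)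
    have : (j₀:ℝ) ≤ (j:ℝ) := by exact_mod_cast hj
    nlinarith
  rcases Nat.even_or_odd n with ⟨m, hm⟩ | ⟨m, hm⟩
  · have h2 : n = 2 + 2*(m-1) := by omega
    rw [h2]
    exact key (m-1) (by omega) 2 (Or.inr rfl)
  · have h2 : n = 1 + 2*m := by omega
    rw [h2]
    exact key m (by omega) 1 (Or.inl rfl)

theorem final {q d : ℕ} (hq : 3 ≤ q) (hd : 2 ≤ d) {β : ℝ} (hβ0 : 0 < β) (hβ1 : β < 1)
    (hM : ∀ α : ℝ, 1 < α → ∀ c₁ c₂ : Fin q, Mval q d α β c₁ c₂ < α ^ (1 / (d : ℝ))) :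
    Filter.Tendsto (pottsGamma q d β) Filter.atTop (nhds 1) := by
  have hq0 : 0 < q := by omega
  have hd0 : 0 < d := by omega
  rw [Metric.tendsto_atTop]
  intro ε' hε'
  obtain ⟨N, hN⟩ := main_bound hq0 hd0 hβ0 hβ1 hM (half_pos hε')
  refine ⟨max N 1, fun n hn => ?_⟩
  have hn1 : 1 ≤ n := le_trans (le_max_right N 1) hn
  have h1 : 1 ≤ pottsGamma q d β n := by
    cases n with
    | zero => omega
    | succ m => exact one_le_pottsGamma hq0 hβ0 hβ1.le
  have h2 : pottsGamma q d β n ≤ 1 + ε'/2 := hN n (le_trans (le_max_left N 1) hn)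
  rw [Real.dist_eq, abs_lt]
  constructor <;> linarith

end Potts

/-- If for all `α > 1` and all colours `c₁, c₂ ∈ [q]` we have `M_{α,c₁,c₂,β} < α^{1/d}`,
then `γ(q,β,d,n) → 1` as `n → ∞`. -/
theorem potts_gamma_tendsto_one_of_M_lt (q d : ℕ) (hq : 3 ≤ q) (hd : 2 ≤ d)
    (β : ℝ) (hβ0 : 0 < β) (hβ1 : β < 1)
    (hM : ∀ α : ℝ, 1 < α → ∀ c₁ c₂ : Fin q,
      Mval q d α β c₁ c₂ < α ^ (1 / (d : ℝ))) :
    Filter.Tendsto (pottsGamma q d β) Filter.atTop (nhds 1) := by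
  exact Potts.final hq hd hβ0 hβ1 hM
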